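/- Critical-value versus derivative inequality: let N≥2 and η ∈ ℝ^N_<, set P(x)=∏_{k=1}^N(x−η_k), and let ζ₁<⋯<ζ_{N−1} be the roots of P′. Then ( min_{1≤k≤N−1} |P(ζ_k)| )^{(N−1)/N} ≤ N · min_{1≤j≤N} |P′(η_j)|. -/

import Mathlib

open Finset Polynomial

noncomputable def Pprod {N : ℕ} (eta : Fin N → ℝ) (x : ℝ) : ℝ := ∏ k, (x - eta k)

lemma Pprod_hasDeriv {N : ℕ} (eta : Fin N → ℝ) (x : ℝ) :
    HasDerivAt (Pprod eta) (∑ i, ∏ l ∈ Finset.univ.erase i, (x - eta l)) x := by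
  have h := HasDerivAt.fun_finsetProd (u := Finset.univ) (f := fun (i : Fin N) (y : ℝ) => y - eta i)
    (f' := fun _ => 1) (x := x) (fun i _ => (hasDerivAt_id x).sub_const (eta i))
  simp at h; exact h

lemma Pprod_deriv {N : ℕ} (eta : Fin N → ℝ) (x : ℝ) :
    deriv (Pprod eta) x = ∑ i, ∏ l ∈ Finset.univ.erase i, (x - eta l) :=
  (Pprod_hasDeriv eta x).deriv

noncomputable def qpoly {N : ℕ} (eta : Fin N → ℝ) : ℝ[X] :=
  ∑ i, ∏ l ∈ Finset.univ.erase i, (X - C (eta l))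

lemma qpoly_eval {N : ℕ} (eta : Fin N → ℝ) (x : ℝ) :
    (qpoly eta).eval x = deriv (Pprod eta) x := by
  rw [Pprod_deriv, qpoly, eval_finset_sum]
  exact Finset.sum_congr rfl fun i _ => by simp [eval_prod]

lemma qpoly_coeff {N : ℕ} (eta : Fin N → ℝ) :
    (qpoly eta).coeff (N - 1) = N := by
  rw [qpoly, finset_sum_coeff]
  have h : ∀ i : Fin N, (∏ l ∈ Finset.univ.erase i, (X - C (eta l))).coeff (N-1) = 1 := by
    intro i
    have hm : (∏ l ∈ Finset.univ.erase i, (X - C (eta l))).Monic :=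
      monic_prod_of_monic _ _ fun l _ => monic_X_sub_C _
    have hd : (∏ l ∈ Finset.univ.erase i, (X - C (eta l))).natDegree = N - 1 := by
      rw [natDegree_prod_of_monic _ _ fun l _ => monic_X_sub_C _]
      simp [Finset.card_erase_of_mem]
    rw [← hd]; exact hm.coeff_natDegree
  simp [h]

lemma qpoly_natDegree_le {N : ℕ} (eta : Fin N → ℝ) :
    (qpoly eta).natDegree ≤ N - 1 := by
  refine Polynomial.natDegree_sum_le_of_forall_le _ _ fun i _ => ?_
  rw [natDegree_prod_of_monic _ _ fun l _ => monic_X_sub_C _]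
  simp [Finset.card_erase_of_mem]

lemma qpoly_ne_zero {N : ℕ} (hN : 1 ≤ N) (eta : Fin N → ℝ) : qpoly eta ≠ 0 := by
  intro h
  have := qpoly_coeff eta
  rw [h] at this
  simp at this
  have : N = 0 := Nat.cast_eq_zero.mp this.symm
  omega

section
variable {N : ℕ} (eta : Fin N → ℝ)

lemma Pprod_continuous : Continuous (Pprod eta) := by
  unfold Pprod
  exact continuous_finset_prod _ fun i _ => (continuous_id.sub continuous_const)

lemma Pprod_root (i : Fin N) : Pprod eta (eta i) = 0 :=
  Finset.prod_eq_zero (Finset.mem_univ i) (by ring)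

lemma interlace (hN : 2 ≤ N) (heta : StrictMono eta)
    (zeta : Fin (N-1) → ℝ) (hzeta : StrictMono zeta)
    (hcrit : ∀ k, deriv (Pprod eta) (zeta k) = 0) :
    ∀ k : Fin (N-1), eta (k.castLE (Nat.sub_le N 1)) < zeta k ∧
      zeta k < eta (Fin.cast (by omega) k.succ) := by
  have hroll : ∀ k : Fin (N-1), ∃ c, c ∈ Set.Ioo (eta (k.castLE (Nat.sub_le N 1)))
      (eta (Fin.cast (by omega : N-1+1 = N) k.succ)) ∧ deriv (Pprod eta) c = 0 := by
    intro k
    have hab : eta (k.castLE (Nat.sub_le N 1)) < eta (Fin.cast (by omega) k.succ) :=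
      heta (by simp [Fin.lt_def])
    obtain ⟨c, hc1, hc2⟩ := exists_deriv_eq_zero hab
      ((Pprod_continuous eta).continuousOn)
      (by rw [Pprod_root, Pprod_root])
    exact ⟨c, hc1, hc2⟩
  choose c hc1 hc2 using hroll
  have hcmono : StrictMono c := by
    intro k l hkl
    calc c k < eta (Fin.cast (by omega) k.succ) := (hc1 k).2
    _ ≤ eta (l.castLE (Nat.sub_le N 1)) := heta.monotone (by
        simp [Fin.le_def]; omega)
    _ < c l := (hc1 l).1
  -- roots finset
  set S := (qpoly eta).roots.toFinset with hS
  have hqne : qpoly eta ≠ 0 := qpoly_ne_zero (by omega) eta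
  have hmem : ∀ x, deriv (Pprod eta) x = 0 → x ∈ S := by
    intro x hx
    rw [hS, Multiset.mem_toFinset, mem_roots hqne]
    exact (qpoly_eval eta x).trans hx
  have hcardS : S.card ≤ N - 1 := by
    calc S.card ≤ (qpoly eta).roots.card := (qpoly eta).roots.toFinset_card_le
    _ ≤ (qpoly eta).natDegree := card_roots' _
    _ ≤ N - 1 := qpoly_natDegree_le eta
  have himc : Finset.image c Finset.univ ⊆ S := by
    intro x hx; obtain ⟨k, _, rfl⟩ := Finset.mem_image.mp hx
    exact hmem _ (hc2 k)
  have himz : Finset.image zeta Finset.univ ⊆ S := by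
    intro x hx; obtain ⟨k, _, rfl⟩ := Finset.mem_image.mp hx
    exact hmem _ (hcrit k)
  have hcardc : (Finset.image c Finset.univ).card = N - 1 := by
    rw [Finset.card_image_of_injective _ hcmono.injective]; simp
  have hcardz : (Finset.image zeta Finset.univ).card = N - 1 := by
    rw [Finset.card_image_of_injective _ hzeta.injective]; simp
  have heq1 : Finset.image c Finset.univ = S :=
    Finset.eq_of_subset_of_card_le himc (by omega)
  have heq2 : Finset.image zeta Finset.univ = S :=
    Finset.eq_of_subset_of_card_le himz (by omega)
  have hrange : Set.range zeta = Set.range c := by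
    have h1 : Set.range zeta = ↑(Finset.image zeta Finset.univ) := by
      simp
    have h2 : Set.range c = ↑(Finset.image c Finset.univ) := by simp
    rw [h1, h2, heq1, heq2]
  haveI : WellFoundedLT (Fin (N-1)) := inferInstance
  have : zeta = c := (StrictMono.range_inj hzeta hcmono).mp hrange
  intro k
  rw [this]
  exact ⟨(hc1 k).1, (hc1 k).2⟩
end
open Finset Real

lemma core {N : ℕ} (hN : 2 ≤ N) (eta : Fin N → ℝ) (heta : StrictMono eta) (j : Fin N) (z : ℝ)
    (h1 : eta j < z) (h2 : ∀ i, j < i → z < eta i)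
    (h3 : ∑ i, (z - eta i)⁻¹ = 0)
    (h4 : ∑ i, (if i < j then (eta j - eta i)⁻¹ else 0) ≤
          ∑ i, (if j < i then (eta i - eta j)⁻¹ else 0)) :
    ∃ i0, i0 ≠ j ∧ (∀ i, i ≠ j → |eta j - eta i0| ≤ |eta j - eta i|) ∧
      ∏ i, |z - eta i| ≤ ((N : ℝ) - 1) * |eta j - eta i0| *
        ∏ i, (if i = j then 1 else |eta j - eta i|) := by
  classical
  set a : Fin N → ℝ := fun i => |eta j - eta i| with ha
  set t : Fin N → ℝ := fun i => |z - eta i| with ht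
  set δ : ℝ := z - eta j with hδdef
  have hδ : 0 < δ := by rw [hδdef]; linarith
  have haL : ∀ i, i < j → a i = eta j - eta i := by
    intro i hij
    show |eta j - eta i| = eta j - eta i
    exact abs_of_pos (by linarith [heta hij])
  have haR : ∀ i, j < i → a i = eta i - eta j := by
    intro i hij
    show |eta j - eta i| = eta i - eta j
    rw [abs_of_neg (by linarith [heta hij])]; ring
  have htL : ∀ i, i < j → t i = a i + δ := by
    intro i hij
    have hh : eta i < eta j := heta hij
    show |z - eta i| = a i + δ
    rw [haL i hij, hδdef, abs_of_pos (by linarith)]; ring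
  have htR : ∀ i, j < i → t i = a i - δ := by
    intro i hij
    have hz : z < eta i := h2 i hij
    show |z - eta i| = a i - δ
    rw [haR i hij, hδdef, abs_of_neg (by linarith)]; ring
  have hδaR : ∀ i, j < i → δ < a i := by
    intro i hij; rw [haR i hij]
    have := h2 i hij; rw [hδdef]; linarith
  have ha_pos : ∀ i, i ≠ j → 0 < a i := by
    intro i hij
    rcases lt_or_gt_of_ne hij with h | h
    · rw [haL i h]; linarith [heta h]
    · rw [haR i h]; linarith [heta h]
  have ht_pos : ∀ i, i ≠ j → 0 < t i := by
    intro i hij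
    rcases lt_or_gt_of_ne hij with h | h
    · rw [htL i h]; have := ha_pos i hij; linarith
    · rw [htR i h]; linarith [hδaR i h]
  -- sets
  set L : Finset (Fin N) := univ.filter (fun i => i < j) with hL
  set R : Finset (Fin N) := univ.filter (fun i => j < i) with hR
  have hsplit : univ.erase j = L ∪ R := by
    ext i
    simp only [hL, hR, Finset.mem_erase, Finset.mem_univ, Finset.mem_union,
      Finset.mem_filter, true_and, and_true]
    constructor
    · intro h; exact lt_or_gt_of_ne h
    · rintro (h | h)
      · exact ne_of_lt h
      · exact ne_of_gt h
  have hdisj : Disjoint L R := by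
    rw [Finset.disjoint_left]
    intro i hiL hiR
    simp [hL, hR] at hiL hiR
    exact absurd (hiL.trans hiR) (lt_irrefl _)
  -- R nonempty
  have hRne : R.Nonempty := by
    by_contra hc
    rw [Finset.not_nonempty_iff_eq_empty] at hc
    have hpos : 0 < ∑ i, (z - eta i)⁻¹ := by
      apply Finset.sum_pos'
      · intro i _
        rcases eq_or_ne i j with rfl | hij
        · positivity
        · have hij' : i < j := by
            rcases lt_or_gt_of_ne hij with h | h
            · exact h
            · exfalso; have : i ∈ R := by simp [hR, h]
              simp [hc] at this
          have := heta hij'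
          have : 0 < z - eta i := by linarith
          positivity
      · exact ⟨j, Finset.mem_univ j, by positivity⟩
    rw [h3] at hpos; exact lt_irrefl _ hpos
  -- min over erase j
  have herase_ne : (univ.erase j).Nonempty := by
    obtain ⟨i1, hi1⟩ := hRne
    exact ⟨i1, by simp [hR] at hi1; simp [Finset.mem_erase]; exact ne_of_gt hi1⟩
  obtain ⟨i0, hi0mem, hi0min⟩ := Finset.exists_min_image (univ.erase j) a herase_ne
  obtain ⟨i1, hi1mem, hi1min⟩ := Finset.exists_min_image R a hRne
  have hi0ne : i0 ≠ j := (Finset.mem_erase.mp hi0mem).1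
  have hi1R : j < i1 := by simpa [hR] using hi1mem
  have hai0 : 0 < a i0 := ha_pos i0 hi0ne
  have hai1 : 0 < a i1 := ha_pos i1 (ne_of_gt hi1R)
  -- rephrase h4 as filtered sums
  have h4' : ∑ i ∈ L, (a i)⁻¹ ≤ ∑ i ∈ R, (a i)⁻¹ := by
    have e1 : ∑ i ∈ L, (a i)⁻¹ = ∑ i, (if i < j then (eta j - eta i)⁻¹ else 0) := by
      rw [Finset.sum_filter]
      exact Finset.sum_congr rfl fun i _ => by
        split <;> rename_i h'
        · rw [haL i h']
        · rfl
    have e2 : ∑ i ∈ R, (a i)⁻¹ = ∑ i, (if j < i then (eta i - eta j)⁻¹ else 0) := by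
      rw [Finset.sum_filter]
      exact Finset.sum_congr rfl fun i _ => by
        split <;> rename_i h'
        · rw [haR i h']
        · rfl
    rw [e1, e2]; exact h4
  -- step (ii) : δ ≤ (N-1) * a i0
  have hcardR : (R.card : ℝ) ≤ (N : ℝ) - 1 := by
    have h1' : R ⊆ univ.erase j := by
      intro i hi; simp [hR] at hi; simp [Finset.mem_erase]; exact ne_of_gt hi
    have := Finset.card_le_card h1'
    rw [Finset.card_erase_of_mem (Finset.mem_univ j)] at this
    simp at this
    have hNc : (1:ℕ) ≤ N := by omega
    have : (R.card : ℝ) ≤ ((N - 1 : ℕ) : ℝ) := by exact_mod_cast this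
    rwa [Nat.cast_sub hNc, Nat.cast_one] at this
  have hstep2 : δ ≤ ((N : ℝ) - 1) * a i0 := by
    rcases lt_or_gt_of_ne hi0ne with hlt | hgt
    · -- i0 < j : use h4'
      have hub : ∑ i ∈ R, (a i)⁻¹ ≤ (R.card : ℝ) * (a i1)⁻¹ := by
        have := Finset.sum_le_card_nsmul R (fun i => (a i)⁻¹) ((a i1)⁻¹)
          (fun i hi => by
            have hij : j < i := by simpa [hR] using hi
            exact inv_anti₀ hai1 (hi1min i hi))
        simpa [nsmul_eq_mul] using this
      have hlb : (a i0)⁻¹ ≤ ∑ i ∈ L, (a i)⁻¹ := by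
        apply Finset.single_le_sum (f := fun i => (a i)⁻¹)
        · intro i hi
          have hij : i < j := by simpa [hL] using hi
          exact le_of_lt (inv_pos.mpr (ha_pos i (ne_of_lt hij)))
        · simp [hL, hlt]
      have hchain : (a i0)⁻¹ ≤ ((N:ℝ) - 1) * (a i1)⁻¹ := by
        calc (a i0)⁻¹ ≤ ∑ i ∈ L, (a i)⁻¹ := hlb
        _ ≤ ∑ i ∈ R, (a i)⁻¹ := h4'
        _ ≤ (R.card : ℝ) * (a i1)⁻¹ := hub
        _ ≤ ((N:ℝ) - 1) * (a i1)⁻¹ := by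
            apply mul_le_mul_of_nonneg_right hcardR (le_of_lt (inv_pos.mpr hai1))
      have hii : a i1 ≤ ((N:ℝ) - 1) * a i0 := by
        have e0 : a i0 * (a i0)⁻¹ = 1 := mul_inv_cancel₀ (ne_of_gt hai0)
        have e1 : a i1 * (a i1)⁻¹ = 1 := mul_inv_cancel₀ (ne_of_gt hai1)
        nlinarith [mul_le_mul_of_nonneg_left hchain (le_of_lt (mul_pos hai0 hai1))]
      linarith [hδaR i1 hi1R]
    · -- j < i0
      have h5 := hδaR i0 hgt
      have hN1 : (1:ℝ) ≤ (N:ℝ) - 1 := by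
        have : (2:ℝ) ≤ (N:ℝ) := by exact_mod_cast hN
        linarith
      nlinarith
  -- step (i) : ∏_{erase j} t ≤ ∏_{erase j} a
  have hlogsum : ∑ i ∈ univ.erase j, Real.log (t i) ≤ ∑ i ∈ univ.erase j, Real.log (a i) := by
    have key : ∀ i ∈ univ.erase j, Real.log (t i) ≤ Real.log (a i) +
        (if i < j then δ * (a i)⁻¹ else -(δ * (a i)⁻¹)) := by
      intro i hi
      have hine : i ≠ j := (Finset.mem_erase.mp hi).1
      have hap := ha_pos i hine
      rcases lt_or_gt_of_ne hine with hlt | hgt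
      · rw [htL i hlt, if_pos hlt]
        have h6 : Real.log (a i + δ) - Real.log (a i) = Real.log ((a i + δ)/(a i)) := by
          rw [Real.log_div (by positivity) (ne_of_gt hap)]
        have h7 : Real.log ((a i + δ)/(a i)) ≤ (a i + δ)/(a i) - 1 :=
          Real.log_le_sub_one_of_pos (by positivity)
        have h8 : (a i + δ)/(a i) - 1 = δ * (a i)⁻¹ := by field_simp; ring
        linarith
      · rw [htR i hgt, if_neg (not_lt.mpr (le_of_lt hgt))]
        have hta := hδaR i hgt
        have h6 : Real.log (a i - δ) - Real.log (a i) = Real.log ((a i - δ)/(a i)) := by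
          rw [Real.log_div (by linarith) (ne_of_gt hap)]
        have h7 : Real.log ((a i - δ)/(a i)) ≤ (a i - δ)/(a i) - 1 :=
          Real.log_le_sub_one_of_pos (by
            apply div_pos <;> linarith)
        have h8 : (a i - δ)/(a i) - 1 = -(δ * (a i)⁻¹) := by field_simp; ring
        linarith
    have hsum := Finset.sum_le_sum key
    have hcorr : ∑ i ∈ univ.erase j, (if i < j then δ * (a i)⁻¹ else -(δ * (a i)⁻¹)) ≤ 0 := by
      rw [hsplit, Finset.sum_union hdisj]
      have eL : ∑ i ∈ L, (if i < j then δ * (a i)⁻¹ else -(δ * (a i)⁻¹)) = δ * ∑ i ∈ L, (a i)⁻¹ := by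
        rw [Finset.mul_sum]
        exact Finset.sum_congr rfl fun i hi => by
          rw [if_pos (by simpa [hL] using hi)]
      have eR : ∑ i ∈ R, (if i < j then δ * (a i)⁻¹ else -(δ * (a i)⁻¹)) = -(δ * ∑ i ∈ R, (a i)⁻¹) := by
        rw [Finset.mul_sum, ← Finset.sum_neg_distrib]
        exact Finset.sum_congr rfl fun i hi => by
          have : j < i := by simpa [hR] using hi
          rw [if_neg (not_lt.mpr (le_of_lt this))]
      rw [eL, eR]
      have := mul_le_mul_of_nonneg_left h4' (le_of_lt hδ)
      linarith
    rw [Finset.sum_add_distrib] at hsum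
    linarith
  have hprod : ∏ i ∈ univ.erase j, t i ≤ ∏ i ∈ univ.erase j, a i := by
    have e1 : ∏ i ∈ univ.erase j, t i = Real.exp (∑ i ∈ univ.erase j, Real.log (t i)) := by
      rw [Real.exp_sum]
      exact Finset.prod_congr rfl fun i hi =>
        (Real.exp_log (ht_pos i (Finset.mem_erase.mp hi).1)).symm
    have e2 : ∏ i ∈ univ.erase j, a i = Real.exp (∑ i ∈ univ.erase j, Real.log (a i)) := by
      rw [Real.exp_sum]
      exact Finset.prod_congr rfl fun i hi =>
        (Real.exp_log (ha_pos i (Finset.mem_erase.mp hi).1)).symm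
    rw [e1, e2]
    exact Real.exp_le_exp.mpr hlogsum
  -- assemble
  refine ⟨i0, hi0ne, ?_, ?_⟩
  · intro i hi
    exact hi0min i (by simp [Finset.mem_erase, hi])
  · have e3 : ∏ i, t i = δ * ∏ i ∈ univ.erase j, t i := by
      rw [← Finset.mul_prod_erase univ t (Finset.mem_univ j)]
      congr 1
      rw [ht]; exact abs_of_pos hδ
    have e4 : ∏ i, (if i = j then 1 else a i) = ∏ i ∈ univ.erase j, a i := by
      rw [← Finset.mul_prod_erase univ _ (Finset.mem_univ j), if_pos rfl, one_mul]
      exact Finset.prod_congr rfl fun i hi => by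
        rw [if_neg (Finset.mem_erase.mp hi).1]
    have hprodpos : 0 ≤ ∏ i ∈ univ.erase j, t i :=
      Finset.prod_nonneg fun i hi => le_of_lt (ht_pos i (Finset.mem_erase.mp hi).1)
    have hprodpos2 : 0 ≤ ∏ i ∈ univ.erase j, a i :=
      Finset.prod_nonneg fun i hi => le_of_lt (ha_pos i (Finset.mem_erase.mp hi).1)
    calc ∏ i, t i = δ * ∏ i ∈ univ.erase j, t i := e3
    _ ≤ δ * ∏ i ∈ univ.erase j, a i := by
        apply mul_le_mul_of_nonneg_left hprod (le_of_lt hδ)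
    _ ≤ (((N:ℝ) - 1) * a i0) * ∏ i ∈ univ.erase j, a i := by
        apply mul_le_mul_of_nonneg_right hstep2 hprodpos2
    _ = ((N:ℝ) - 1) * a i0 * ∏ i, (if i = j then 1 else a i) := by rw [e4]
section
variable {N : ℕ} (eta : Fin N → ℝ)
lemma crit_sum (z : ℝ) (hnz : ∀ i, z - eta i ≠ 0)
    (hd : deriv (Pprod eta) z = 0) : ∑ i, (z - eta i)⁻¹ = 0 := by
  have hP : ∏ i, (z - eta i) ≠ 0 := Finset.prod_ne_zero_iff.mpr (fun i _ => hnz i)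
  have h0 : ∑ i, ∏ l ∈ Finset.univ.erase i, (z - eta l) = 0 := by
    rw [← Pprod_deriv]; exact hd
  have he : ∀ i : Fin N, ∏ l ∈ Finset.univ.erase i, (z - eta l)
      = (z - eta i)⁻¹ * ∏ l, (z - eta l) := by
    intro i
    rw [← Finset.mul_prod_erase Finset.univ _ (Finset.mem_univ i), ← mul_assoc,
      inv_mul_cancel₀ (hnz i), one_mul]
  rw [Finset.sum_congr rfl (fun i _ => he i), ← Finset.sum_mul] at h0
  exact (mul_eq_zero.mp h0).resolve_right hP

lemma deriv_at_eta (j : Fin N) :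
    deriv (Pprod eta) (eta j) = ∏ i ∈ Finset.univ.erase j, (eta j - eta i) := by
  rw [Pprod_deriv]
  apply Finset.sum_eq_single j
  · intro i _ hij
    exact Finset.prod_eq_zero (Finset.mem_erase.mpr ⟨hij.symm, Finset.mem_univ j⟩) (by ring)
  · intro h; exact absurd (Finset.mem_univ j) h
end

lemma final_numeric (n : ℕ) (m M a0 : ℝ) (hm : 0 ≤ m) (hM : 0 < M) (ha0 : 0 < a0)
    (h1 : m ≤ (((n:ℝ)+2) - 1) * a0 * M) (h2 : a0 ^ (n+1) ≤ M) :
    m ^ ((((n:ℝ)+2) - 1) / ((n:ℝ)+2)) ≤ ((n:ℝ)+2) * M := by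
  have hm1 : m ≤ ((n:ℝ)+1) * a0 * M := by linarith
  have key : m ^ (n+1) ≤ (((n:ℝ)+2)*M)^(n+2) := by
    calc m^(n+1) ≤ (((n:ℝ)+1)*a0*M)^(n+1) := by
          apply pow_le_pow_left₀ hm hm1
    _ = ((n:ℝ)+1)^(n+1) * (a0^(n+1) * M^(n+1)) := by rw [mul_pow, mul_pow]; ring
    _ ≤ ((n:ℝ)+1)^(n+1) * (M * M^(n+1)) := by
        apply mul_le_mul_of_nonneg_left _ (by positivity)
        exact mul_le_mul_of_nonneg_right h2 (by positivity)
    _ = ((n:ℝ)+1)^(n+1) * M^(n+2) := by ring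
    _ ≤ ((n:ℝ)+2)^(n+2) * M^(n+2) := by
        apply mul_le_mul_of_nonneg_right _ (by positivity)
        calc ((n:ℝ)+1)^(n+1) ≤ ((n:ℝ)+2)^(n+1) := by
              apply pow_le_pow_left₀ (by positivity) (by linarith)
        _ ≤ ((n:ℝ)+2)^(n+2) := by
              apply pow_le_pow_right₀ (by linarith) (by omega)
    _ = (((n:ℝ)+2)*M)^(n+2) := by rw [mul_pow]
  have hMn : (0:ℝ) ≤ ((n:ℝ)+2)*M := by positivity
  have e : m ^ ((((n:ℝ)+2) - 1) / ((n:ℝ)+2)) = (m ^ (n+1 : ℕ)) ^ (((n:ℝ)+2)⁻¹) := by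
    rw [← Real.rpow_natCast m (n+1), ← Real.rpow_mul hm]
    congr 1
    push_cast
    rw [div_eq_mul_inv]
    ring
  have e2 : (((n:ℝ)+2)*M) = ((((n:ℝ)+2)*M) ^ (n+2 : ℕ)) ^ (((n:ℝ)+2)⁻¹) := by
    rw [← Real.rpow_natCast _ (n+2), ← Real.rpow_mul hMn]
    rw [show ((n+2 : ℕ):ℝ) * ((n:ℝ)+2)⁻¹ = 1 by push_cast; field_simp]
    exact (Real.rpow_one _).symm
  rw [e, e2]
  exact Real.rpow_le_rpow (by positivity) key (by positivity)
set_option maxHeartbeats 1600000 in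
theorem crit_value_vs_derivative (N : ℕ) (hN : 2 ≤ N) (eta : Fin N → ℝ)
    (heta : StrictMono eta) (zeta : Fin (N - 1) → ℝ) (hzeta : StrictMono zeta)
    (hcrit : ∀ k, deriv (Pprod eta) (zeta k) = 0) :
    (⨅ k : Fin (N - 1), |Pprod eta (zeta k)|) ^ (((N : ℝ) - 1) / N) ≤
      N * ⨅ j : Fin N, |deriv (Pprod eta) (eta j)| := by
  classical
  obtain ⟨n, rfl⟩ : ∃ n, N = n + 2 := ⟨N - 2, by omega⟩
  haveI : Nonempty (Fin (n+2)) := ⟨⟨0, by omega⟩⟩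
  haveI : Nonempty (Fin (n+2-1)) := ⟨⟨0, by omega⟩⟩
  have hint := interlace eta hN heta zeta hzeta hcrit
  obtain ⟨js, hjs⟩ := Finite.exists_min (fun j : Fin (n+2) => |deriv (Pprod eta) (eta j)|)
  set M : ℝ := ∏ i ∈ Finset.univ.erase js, |eta js - eta i| with hM
  have hMeq : |deriv (Pprod eta) (eta js)| = M := by
    rw [deriv_at_eta, hM, Finset.abs_prod]
  have hMpos : 0 < M := by
    rw [hM]
    apply Finset.prod_pos
    intro i hi
    have : eta js ≠ eta i := fun h => (Finset.mem_erase.mp hi).1 (heta.injective h.symm)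
    exact abs_pos.mpr (sub_ne_zero.mpr this)
  have hRHS : ((n+2:ℕ):ℝ) * M ≤ ((n+2:ℕ):ℝ) * ⨅ j : Fin (n+2), |deriv (Pprod eta) (eta j)| := by
    apply mul_le_mul_of_nonneg_left _ (by positivity)
    apply le_ciInf
    intro i
    rw [← hMeq]; exact hjs i
  set m : ℝ := ⨅ k : Fin (n+2-1), |Pprod eta (zeta k)| with hm
  have hm0 : 0 ≤ m := le_ciInf fun k => abs_nonneg _
  set SL : ℝ := ∑ i, (if i < js then (eta js - eta i)⁻¹ else 0) with hSL
  set SR : ℝ := ∑ i, (if js < i then (eta i - eta js)⁻¹ else 0) with hSR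
  have e4 : ∏ i, (if i = js then 1 else |eta js - eta i|) = M := by
    rw [hM, ← Finset.mul_prod_erase Finset.univ _ (Finset.mem_univ js), if_pos rfl, one_mul]
    exact Finset.prod_congr rfl fun i hi => by rw [if_neg (Finset.mem_erase.mp hi).1]
  have key : ∃ i0 : Fin (n+2), i0 ≠ js ∧
      (∀ i, i ≠ js → |eta js - eta i0| ≤ |eta js - eta i|) ∧
      m ≤ (((n+2:ℕ):ℝ)-1) * |eta js - eta i0| * M := by
    rcases le_total SL SR with hside | hside
    · -- right case
      have hjslt : js.1 < n+2 - 1 := by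
        by_contra hc
        push_neg at hc
        have hR0 : SR = 0 := by
          rw [hSR]
          apply Finset.sum_eq_zero
          intro i _
          rw [if_neg]
          intro h
          have h2 : js.1 < i.1 := h
          have := i.2
          omega
        have hL0 : 0 < SL := by
          rw [hSL]
          apply Finset.sum_pos'
          · intro i _
            split <;> rename_i h'
            · exact inv_nonneg.mpr (by linarith [heta h'])
            · exact le_refl 0
          · refine ⟨⟨0, by omega⟩, Finset.mem_univ _, ?_⟩
            have h0j : (⟨0, by omega⟩ : Fin (n+2)) < js := by
              rw [Fin.lt_def]
              show 0 < js.1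
              omega
            rw [if_pos h0j]
            exact inv_pos.mpr (by linarith [heta h0j])
        linarith
      set g : Fin (n+2-1) := ⟨js.1, hjslt⟩ with hg
      set z : ℝ := zeta g with hz
      obtain ⟨hgl, hgr⟩ := hint g
      have hcast1 : (g.castLE (Nat.sub_le (n+2) 1)) = js := by
        apply Fin.ext; simp [hg]
      have h1 : eta js < z := by rw [← hcast1]; exact hgl
      have h2 : ∀ i, js < i → z < eta i := by
        intro i hi
        calc z < eta (Fin.cast (by omega) g.succ) := hgr
        _ ≤ eta i := by
            apply heta.monotone
            rw [Fin.le_def]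
            have : js.1 < i.1 := hi
            simp [hg]
            omega
      have hnz : ∀ i, z - eta i ≠ 0 := by
        intro i
        rcases le_or_gt i js with h | h
        · have h6 : eta i ≤ eta js := heta.monotone h
          intro hc; have := sub_eq_zero.mp hc; linarith
        · have := h2 i h
          intro hc; have := sub_eq_zero.mp hc; linarith
      have h3 : ∑ i, (z - eta i)⁻¹ = 0 := crit_sum eta z hnz (hcrit g)
      obtain ⟨i0, hi0ne, hi0min, hle⟩ := core hN eta heta js z h1 h2 h3 hside
      refine ⟨i0, hi0ne, hi0min, ?_⟩
      calc m ≤ |Pprod eta (zeta g)| := ciInf_le (Set.finite_range _).bddBelow g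
      _ = ∏ i, |z - eta i| := by rw [Pprod, ← hz, Finset.abs_prod]
      _ ≤ (((n+2:ℕ):ℝ)-1) * |eta js - eta i0| *
            ∏ i, (if i = js then 1 else |eta js - eta i|) := hle
      _ = (((n+2:ℕ):ℝ)-1) * |eta js - eta i0| * M := by rw [e4]
    · -- left case via reflection
      have hjsge : 1 ≤ js.1 := by
        by_contra hc
        push_neg at hc
        have hL0 : SL = 0 := by
          rw [hSL]
          apply Finset.sum_eq_zero
          intro i _
          rw [if_neg]
          intro h
          have : i.1 < js.1 := h
          omega
        have hR0 : 0 < SR := by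
          rw [hSR]
          apply Finset.sum_pos'
          · intro i _
            split <;> rename_i h'
            · exact inv_nonneg.mpr (by linarith [heta h'])
            · exact le_refl 0
          · refine ⟨⟨1, by omega⟩, Finset.mem_univ _, ?_⟩
            have h0j : js < (⟨1, by omega⟩ : Fin (n+2)) := by
              rw [Fin.lt_def]
              show js.1 < 1
              omega
            rw [if_pos h0j]
            exact inv_pos.mpr (by linarith [heta h0j])
        linarith
      set g : Fin (n+2-1) := ⟨js.1 - 1, by omega⟩ with hg
      set z : ℝ := zeta g with hz
      obtain ⟨hgl, hgr⟩ := hint g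
      have hcast1 : (Fin.cast (by omega : n+2-1+1 = n+2) g.succ) = js := by
        apply Fin.ext; simp [hg]; omega
      have h1 : z < eta js := by rw [← hcast1]; exact hgr
      have h2 : ∀ i, i < js → eta i < z := by
        intro i hi
        calc eta i ≤ eta (g.castLE (Nat.sub_le (n+2) 1)) := by
              apply heta.monotone
              rw [Fin.le_def]
              have : i.1 < js.1 := hi
              simp [hg]
              omega
        _ < z := hgl
      set eta' : Fin (n+2) → ℝ := fun i => -eta i.rev with heta'def
      have heta' : StrictMono eta' := by
        intro i i' hii
        have h7 : i'.rev < i.rev := by rw [Fin.rev_lt_rev]; exact hii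
        have := heta h7
        simp only [heta'def]
        linarith
      set js' : Fin (n+2) := js.rev with hjs'
      set z' : ℝ := -z with hz'
      have hrevjs : js'.rev = js := by rw [hjs', Fin.rev_rev]
      have h1' : eta' js' < z' := by
        simp only [heta'def, hz', hrevjs]
        linarith
      have h2' : ∀ i, js' < i → z' < eta' i := by
        intro i hi
        have hrev : i.rev < js := by
          have := Fin.rev_lt_rev.mpr hi
          rwa [hrevjs] at this
        have := h2 i.rev hrev
        simp only [heta'def, hz']
        linarith
      have hnz : ∀ i, z - eta i ≠ 0 := by
        intro i
        rcases le_or_gt js i with h | h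
        · have h6 : eta js ≤ eta i := heta.monotone h
          intro hc; have := sub_eq_zero.mp hc; linarith
        · have := h2 i h
          intro hc; have := sub_eq_zero.mp hc; linarith
      have h3 : ∑ i, (z - eta i)⁻¹ = 0 := crit_sum eta z hnz (hcrit g)
      have h3' : ∑ i, (z' - eta' i)⁻¹ = 0 := by
        have e6 : ∑ i : Fin (n+2), (z' - eta' i)⁻¹ = ∑ i : Fin (n+2), -((z - eta i.rev)⁻¹) := by
          apply Finset.sum_congr rfl
          intro i _
          simp only [heta'def, hz']
          rw [show -z - -eta i.rev = -(z - eta i.rev) by ring, inv_neg]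
        have e7 : ∑ i : Fin (n+2), (z - eta i.rev)⁻¹ = ∑ i : Fin (n+2), (z - eta i)⁻¹ :=
          Fintype.sum_equiv (Fin.revPerm : Equiv.Perm (Fin (n+2))) _ _ (fun i => rfl)
        rw [e6, Finset.sum_neg_distrib, e7, h3, neg_zero]
      have h4' : ∑ i, (if i < js' then (eta' js' - eta' i)⁻¹ else 0) ≤
          ∑ i, (if js' < i then (eta' i - eta' js')⁻¹ else 0) := by
        have eL : ∑ i, (if i < js' then (eta' js' - eta' i)⁻¹ else 0) = SR := by
          rw [hSR]
          refine Fintype.sum_equiv (Fin.revPerm : Equiv.Perm (Fin (n+2))) _ _ (fun i => ?_)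
          simp only [Fin.revPerm_apply]
          have hiff : i < js' ↔ js < i.rev := by
            constructor
            · intro h
              have := Fin.rev_lt_rev.mpr h
              rwa [hrevjs] at this
            · intro h
              have := Fin.rev_lt_rev.mpr h
              rwa [Fin.rev_rev] at this
          by_cases hcond : js < i.rev
          · rw [if_pos (hiff.mpr hcond), if_pos hcond]
            simp only [heta'def, hrevjs]
            congr 1
            ring
          · rw [if_neg (fun h => hcond (hiff.mp h)), if_neg hcond]
        have eR : ∑ i, (if js' < i then (eta' i - eta' js')⁻¹ else 0) = SL := by
          rw [hSL]
          refine Fintype.sum_equiv (Fin.revPerm : Equiv.Perm (Fin (n+2))) _ _ (fun i => ?_)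
          simp only [Fin.revPerm_apply]
          have hiff : js' < i ↔ i.rev < js := by
            constructor
            · intro h
              have := Fin.rev_lt_rev.mpr h
              rwa [hrevjs] at this
            · intro h
              have := Fin.rev_lt_rev.mpr h
              rwa [Fin.rev_rev] at this
          by_cases hcond : i.rev < js
          · rw [if_pos (hiff.mpr hcond), if_pos hcond]
            simp only [heta'def, hrevjs]
            congr 1
            ring
          · rw [if_neg (fun h => hcond (hiff.mp h)), if_neg hcond]
        rw [eL, eR]
        exact hside
      obtain ⟨i0', hi0ne', hi0min', hle'⟩ := core hN eta' heta' js' z' h1' h2' h3' h4'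
      have habs : ∀ i : Fin (n+2), |eta' js' - eta' i| = |eta js - eta i.rev| := by
        intro i
        simp only [heta'def, hrevjs]
        rw [show -eta js - -eta i.rev = -(eta js - eta i.rev) by ring, abs_neg]
      refine ⟨i0'.rev, ?_, ?_, ?_⟩
      · intro h
        apply hi0ne'
        rw [hjs', ← h, Fin.rev_rev]
      · intro i hi
        have hi' : i.rev ≠ js' := by
          intro h
          apply hi
          rw [← Fin.rev_rev i, h, hrevjs]
        have := hi0min' i.rev hi'
        rw [habs, habs, Fin.rev_rev] at this
        exact this
      · have eP : ∏ i, |z' - eta' i| = ∏ i, |z - eta i| := by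
          have : ∀ i : Fin (n+2), |z' - eta' i| = |z - eta i.rev| := by
            intro i
            simp only [heta'def, hz']
            rw [show -z - -eta i.rev = -(z - eta i.rev) by ring, abs_neg]
          rw [Finset.prod_congr rfl (fun i _ => this i)]
          exact Fintype.prod_equiv (Fin.revPerm : Equiv.Perm (Fin (n+2))) _ _ (fun i => rfl)
        have eQ : ∏ i, (if i = js' then 1 else |eta' js' - eta' i|) = M := by
          rw [← e4]
          refine Fintype.prod_equiv (Fin.revPerm : Equiv.Perm (Fin (n+2))) _ _ (fun i => ?_)
          simp only [Fin.revPerm_apply]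
          have hiff : i = js' ↔ i.rev = js := by
            constructor
            · intro h; rw [h, hrevjs]
            · intro h; rw [← Fin.rev_rev i, h, hjs']
          by_cases hcond : i.rev = js
          · rw [if_pos (hiff.mpr hcond), if_pos hcond]
          · rw [if_neg (fun h => hcond (hiff.mp h)), if_neg hcond, habs]
        calc m ≤ |Pprod eta (zeta g)| := ciInf_le (Set.finite_range _).bddBelow g
        _ = ∏ i, |z - eta i| := by rw [Pprod, ← hz, Finset.abs_prod]
        _ = ∏ i, |z' - eta' i| := eP.symm
        _ ≤ (((n+2:ℕ):ℝ)-1) * |eta' js' - eta' i0'| *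
              ∏ i, (if i = js' then 1 else |eta' js' - eta' i|) := hle'
        _ = (((n+2:ℕ):ℝ)-1) * |eta js - eta i0'.rev| * M := by rw [eQ, habs]
  obtain ⟨i0, hi0ne, hi0min, hkey⟩ := key
  set a0 : ℝ := |eta js - eta i0| with ha0def
  have ha0 : 0 < a0 :=
    abs_pos.mpr (sub_ne_zero.mpr (fun h => hi0ne (heta.injective h.symm)))
  have hpow : a0 ^ (n+1) ≤ M := by
    have h8 : ∏ _i ∈ Finset.univ.erase js, a0 ≤ ∏ i ∈ Finset.univ.erase js, |eta js - eta i| :=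
      Finset.prod_le_prod (fun _ _ => le_of_lt ha0)
        (fun i hi => hi0min i (Finset.mem_erase.mp hi).1)
    rw [Finset.prod_const, Finset.card_erase_of_mem (Finset.mem_univ js)] at h8
    simpa using h8
  have hkey' : m ≤ (((n:ℝ)+2)-1) * a0 * M := by
    push_cast at hkey
    convert hkey using 2
  have hfin := final_numeric n m M a0 hm0 hMpos ha0 hkey' hpow
  have egoal : (((n+2:ℕ):ℝ) - 1) / ((n+2:ℕ):ℝ) = (((n:ℝ)+2) - 1) / ((n:ℝ)+2) := by push_cast; ring
  rw [egoal]
  calc m ^ ((((n:ℝ)+2) - 1) / ((n:ℝ)+2)) ≤ ((n:ℝ)+2) * M := hfin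
  _ = ((n+2:ℕ):ℝ) * M := by push_cast; ring
  _ ≤ ((n+2:ℕ):ℝ) * ⨅ j : Fin (n+2), |deriv (Pprod eta) (eta j)| := hRHS
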